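/- Let L ≥ 2 be an integer, let E = {exp(i(2πm/L + π/L)) : m = 0, 1, …, L−1} ⊂ ℂ, and let P be the convex hull of E in ℂ viewed as ℝ². Let v ∈ ℂ with v ≠ 0, let ∠v ∈ [0, 2π) denote its argument, set m = ⌊(∠v + π/L)/(2π/L)⌋ and ṽ = v·exp(−i·2πm/L). Then the point Π(v) = exp(i·2πm/L)·( clamp(Re ṽ; 0, cos(π/L)) + i·clamp(Im ṽ; −sin(π/L), sin(π/L)) ) belongs to P and is the unique point of P closest to v in Euclidean distance, where clamp(x; a, b) = min{b, max{x, a}}. -/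

import Mathlib

open scoped BigOperators

open Real Complex

private lemma auxV2 (c s cα sα : ℝ) (h1 : c^2 + s^2 = 1) (h2 : cα^2 + sα^2 = 1) :
    c * cα + s * sα ≤ 1 := by
  nlinarith [sq_nonneg (c*sα - s*cα), sq_nonneg (c*cα + s*sα - 1)]

private lemma auxCore (c s a B cα sα : ℝ) (hc : 0 ≤ c) (hs : 0 < s) (h1 : c^2 + s^2 = 1)
    (ha : 0 ≤ a) (hB : 0 ≤ B) (hcone : c * B ≤ s * a)
    (hcos : cα ≤ c) (hsα : 0 ≤ sα) (hV2 : c * cα + s * sα ≤ 1) :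
    a * cα + B * sα ≤ a * c + B * s := by
  rcases le_or_gt sα s with h | h
  · nlinarith [mul_nonneg ha (sub_nonneg.2 hcos), mul_nonneg hB (sub_nonneg.2 h)]
  · have hc0 : 0 < c := by
      rcases hc.lt_or_eq with h' | h'
      · exact h'
      · exfalso; nlinarith
    nlinarith [mul_nonneg ha (sub_nonneg.2 hV2),
      mul_nonneg (sub_nonneg.2 hcone) (sub_pos.2 h).le]

private lemma auxV1 (L : ℕ) (hL : 2 ≤ L) (j : ℤ) :
    Real.cos ((2*(j:ℝ)+1) * Real.pi / L) ≤ Real.cos (Real.pi / L) := by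
  have hL0 : (0:ℝ) < L := by positivity
  have hLR : (L:ℝ) ≠ 0 := ne_of_gt hL0
  set n : ℤ := j % L with hn
  set q : ℤ := j / L with hq
  have hj : j = n + L * q := by
    rw [hn, hq]
    have := Int.emod_add_mul_ediv j L
    omega
  have hn0 : 0 ≤ n := Int.emod_nonneg j (by positivity)
  have hnL : n < L := Int.emod_lt_of_pos j (by exact_mod_cast Nat.pos_of_ne_zero (by omega))
  have hrw : (2*(j:ℝ)+1) * Real.pi / L = (2*(n:ℝ)+1) * Real.pi / L + q * (2 * Real.pi) := by
    have : (j:ℝ) = n + L * q := by exact_mod_cast hj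
    rw [this]; field_simp; ring
  rw [hrw, Real.cos_add_int_mul_two_pi]
  have hpiL0 : 0 < Real.pi / L := by positivity
  have hnR0 : (0:ℝ) ≤ n := by exact_mod_cast hn0
  have hnRL : (n:ℝ) ≤ L - 1 := by
    have h' : n ≤ (L:ℤ) - 1 := by omega
    have h'' : (n:ℝ) ≤ (((L:ℤ) - 1 : ℤ) : ℝ) := by exact_mod_cast h'
    push_cast at h''; linarith
  set x := (2*(n:ℝ)+1) * Real.pi / L with hx
  have hx1 : Real.pi / L ≤ x := by
    rw [hx]; rw [div_le_div_iff₀ hL0 hL0]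
    nlinarith [Real.pi_pos, mul_nonneg (mul_nonneg hnR0 Real.pi_pos.le) hL0.le]
  have hx2 : x ≤ 2 * Real.pi - Real.pi / L := by
    rw [hx]
    have : (2*(n:ℝ)+1) * Real.pi / L ≤ (2*((L:ℝ)-1)+1) * Real.pi / L := by
      gcongr
    calc (2*(n:ℝ)+1) * Real.pi / L ≤ (2*((L:ℝ)-1)+1) * Real.pi / L := this
      _ = 2 * Real.pi - Real.pi / L := by field_simp; ring
  rcases le_or_gt x Real.pi with h | h
  · exact Real.cos_le_cos_of_nonneg_of_le_pi hpiL0.le h hx1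
  · have hcx : Real.cos x = Real.cos (2 * Real.pi - x) := by
      rw [Real.cos_sub]; simp
    rw [hcx]
    apply Real.cos_le_cos_of_nonneg_of_le_pi hpiL0.le (by linarith) (by linarith)

private lemma auxRot (u z w : ℂ) (hu : u.re^2 + u.im^2 = 1) :
    (u*z).re*(u*w).re + (u*z).im*(u*w).im = z.re*w.re + z.im*w.im := by
  simp only [Complex.mul_re, Complex.mul_im]
  linear_combination (z.re*w.re + z.im*w.im) * hu

private lemma auxComb3 (S : Set ℂ) (hS : Convex ℝ S) (p₁ p₂ p₃ : ℂ)
    (h1 : p₁ ∈ S) (h2 : p₂ ∈ S) (h3 : p₃ ∈ S) (t₁ t₂ t₃ : ℝ)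
    (ht1 : 0 ≤ t₁) (ht2 : 0 ≤ t₂) (ht3 : 0 ≤ t₃) (hsum : t₁+t₂+t₃ = 1) :
    t₁•p₁ + t₂•p₂ + t₃•p₃ ∈ S := by
  have h := Convex.sum_mem hS (t := (Finset.univ : Finset (Fin 3)))
    (w := ![t₁,t₂,t₃]) (z := ![p₁,p₂,p₃])
    (by intro i _; fin_cases i <;> assumption)
    (by simp [Fin.sum_univ_three]; linarith)
    (by intro i _; fin_cases i <;> assumption)
  simpa [Fin.sum_univ_three] using h

private lemma auxMem (L : ℕ) (hL : 2 ≤ L) (j : ℤ) :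
    ∃ m : ℕ, m < L ∧ Complex.exp (Complex.I * (((2*(j:ℝ)+1) * Real.pi / L : ℝ) : ℂ)) =
      Complex.exp (Complex.I * ((2 * Real.pi * m / L + Real.pi / L : ℝ) : ℂ)) := by
  have hL0 : (L:ℝ) ≠ 0 := by positivity
  have hLpos : (0:ℤ) < (L:ℤ) := by exact_mod_cast Nat.pos_of_ne_zero (by omega)
  set n : ℤ := j % L with hn
  set q : ℤ := j / L with hq
  have hn0 : 0 ≤ n := Int.emod_nonneg j (by omega)
  have hnL : n < L := Int.emod_lt_of_pos j hLpos
  have hj : j = n + L * q := by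
    rw [hn, hq]; have := Int.emod_add_mul_ediv j L; omega
  refine ⟨n.toNat, by omega, ?_⟩
  have hcast : ((n.toNat : ℕ) : ℝ) = (n:ℝ) := by
    norm_cast; exact Int.toNat_of_nonneg hn0
  have hreal : ((2*(j:ℝ)+1) * Real.pi / L : ℝ) =
      (2 * Real.pi * ((n.toNat : ℕ):ℝ) / L + Real.pi / L) + q * (2*Real.pi) := by
    rw [hcast]
    have hjr : (j:ℝ) = (n:ℝ) + (L:ℝ) * (q:ℝ) := by exact_mod_cast hj
    rw [hjr]; field_simp; ring
  have key : Complex.I * (((2*(j:ℝ)+1) * Real.pi / L : ℝ) : ℂ) =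
      Complex.I * ((2 * Real.pi * (n.toNat:ℕ) / L + Real.pi / L : ℝ) : ℂ) +
        (q:ℂ) * (2*(Real.pi:ℂ)*Complex.I) := by
    rw [hreal]; push_cast; ring
  rw [key, Complex.exp_add, Complex.exp_int_mul_two_pi_mul_I, mul_one]

private lemma auxZero (L : ℕ) (hL : 2 ≤ L) (E : Set ℂ)
    (hE : E = {z : ℂ | ∃ m : ℕ, m < L ∧
      z = Complex.exp (Complex.I * ((2 * Real.pi * m / L + Real.pi / L : ℝ) : ℂ))}) :
    (0:ℂ) ∈ convexHull ℝ E := by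
  have hL0 : (L:ℝ) ≠ 0 := by positivity
  have hfE : ∀ k ∈ Finset.range L,
      Complex.exp (Complex.I * ((2*Real.pi*(k:ℕ)/L + Real.pi/L : ℝ):ℂ)) ∈ E := by
    intro k hk; rw [hE]; exact ⟨k, Finset.mem_range.1 hk, rfl⟩
  have hfk : ∀ k : ℕ,
      Complex.exp (Complex.I * ((2*Real.pi*(k:ℕ)/L + Real.pi/L : ℝ):ℂ)) =
      Complex.exp (Complex.I * ((Real.pi/L:ℝ):ℂ)) *
        (Complex.exp (((2*Real.pi/L : ℝ):ℂ) * Complex.I))^k := by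
    intro k
    rw [← Complex.exp_nat_mul, ← Complex.exp_add]
    congr 1; push_cast; ring
  have hζL : (Complex.exp (((2*Real.pi/L : ℝ):ℂ) * Complex.I))^L = 1 := by
    rw [← Complex.exp_nat_mul]
    have : (L:ℂ) * (((2*Real.pi/L:ℝ):ℂ) * Complex.I) = 2*(Real.pi:ℂ)*Complex.I := by
      have hLC : (L:ℂ) ≠ 0 := by exact_mod_cast hL0
      push_cast; field_simp
    rw [this, Complex.exp_two_pi_mul_I]
  have hζ1 : Complex.exp (((2*Real.pi/L : ℝ):ℂ) * Complex.I) ≠ 1 := by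
    intro h
    rw [Complex.exp_eq_one_iff] at h
    obtain ⟨k, hk⟩ := h
    have h2 : ((2*Real.pi/L:ℝ):ℂ) = (k:ℂ)*(2*(Real.pi:ℂ)) :=
      mul_right_cancel₀ Complex.I_ne_zero (by rw [hk]; ring)
    have hr : (2*Real.pi/L : ℝ) = (k:ℝ)*(2*Real.pi) := by exact_mod_cast h2
    have hπ := Real.pi_pos
    have hLpos : (2:ℝ) ≤ L := by exact_mod_cast hL
    have hd : 0 < (L:ℝ) := by positivity
    rcases le_or_gt 1 k with hk1 | hk1
    · have hk1' : (1:ℝ) ≤ (k:ℝ) := by exact_mod_cast hk1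
      rw [div_eq_iff hL0] at hr
      have h2kL : (2:ℝ) ≤ (k:ℝ)*(L:ℝ) := by
        have := mul_le_mul hk1' hLpos (by norm_num) (by linarith)
        linarith
      nlinarith
    · have hk1' : (k:ℝ) ≤ 0 := by exact_mod_cast (by omega : k ≤ 0)
      have h3 : (k:ℝ)*(2*Real.pi) ≤ 0 := by nlinarith
      have h4 : 0 < (2*Real.pi/L : ℝ) := by positivity
      linarith [hr ▸ h4]
  have hsum : ∑ k ∈ Finset.range L,
      Complex.exp (Complex.I * ((2*Real.pi*(k:ℕ)/L + Real.pi/L : ℝ):ℂ)) = 0 := by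
    rw [Finset.sum_congr rfl (fun k _ => hfk k), ← Finset.mul_sum,
      geom_sum_eq hζ1, hζL]
    simp
  have h0 : (0:ℂ) = ∑ k ∈ Finset.range L,
      (1/(L:ℝ)) • Complex.exp (Complex.I * ((2*Real.pi*(k:ℕ)/L + Real.pi/L : ℝ):ℂ)) := by
    rw [← Finset.smul_sum, hsum, smul_zero]
  rw [h0]
  refine Convex.sum_mem (convex_convexHull ℝ E) (fun i _ => by positivity) ?_
    (fun i hi => subset_convexHull ℝ E (hfE i hi))
  rw [Finset.sum_const, Finset.card_range, nsmul_eq_mul]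
  field_simp

private lemma auxDist (d1 d2 Q : ℝ) (h : d1^2 + Q ≤ d2^2) (hQ : 0 ≤ Q)
    (h1 : 0 ≤ d1) (h2 : 0 ≤ d2) : d1 ≤ d2 := by nlinarith

set_option maxHeartbeats 400000 in
/-- The closed-form element-wise projection (46) of the paper: Π(v) as given by the
rotate–clamp–rotate-back formula belongs to the convex hull P of the discrete
phase-shifter values and is the unique point of P closest to v. -/
theorem stmt15 (L : ℕ) (hL : 2 ≤ L)
    (E : Set ℂ)
    (hE : E = {z : ℂ | ∃ m : ℕ, m < L ∧
      z = Complex.exp (Complex.I * ((2 * Real.pi * m / L + Real.pi / L : ℝ) : ℂ))})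
    (v : ℂ) (hv : v ≠ 0)
    (θ : ℝ) (hθ0 : 0 ≤ θ) (hθ2 : θ < 2 * Real.pi)
    (hθ : v = ((‖v‖ : ℝ) : ℂ) * Complex.exp (Complex.I * (θ : ℂ)))
    (m : ℤ) (hm : m = ⌊(θ + Real.pi / L) / (2 * Real.pi / L)⌋)
    (vt : ℂ) (hvt : vt = v * Complex.exp (-(Complex.I * ((2 * Real.pi * m / L : ℝ) : ℂ))))
    (Pv : ℂ)
    (hPv : Pv = Complex.exp (Complex.I * ((2 * Real.pi * m / L : ℝ) : ℂ)) *
      (((min (Real.cos (Real.pi / L)) (max vt.re 0) : ℝ) : ℂ) +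
        Complex.I * ((min (Real.sin (Real.pi / L))
          (max vt.im (-(Real.sin (Real.pi / L)))) : ℝ) : ℂ))) :
    Pv ∈ convexHull ℝ E ∧
    (∀ q ∈ convexHull ℝ E, dist v Pv ≤ dist v q) ∧
    (∀ q ∈ convexHull ℝ E, dist v q = dist v Pv → q = Pv) := by
  have hπ := Real.pi_pos
  have hL0 : (0:ℝ) < L := by positivity
  have hLR : (L:ℝ) ≠ 0 := ne_of_gt hL0
  have hL2 : (2:ℝ) ≤ L := by exact_mod_cast hL
  set c : ℝ := Real.cos (Real.pi / L) with hc_def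
  set s : ℝ := Real.sin (Real.pi / L) with hs_def
  have hpiL_pos : 0 < Real.pi / L := by positivity
  have hpiL_le : Real.pi / L ≤ Real.pi / 2 := by
    apply div_le_div_of_nonneg_left hπ.le (by norm_num) hL2
  have hs_pos : 0 < s := Real.sin_pos_of_pos_of_lt_pi hpiL_pos (by linarith only [hpiL_le, hπ])
  have hc_nonneg : 0 ≤ c := Real.cos_nonneg_of_mem_Icc ⟨by linarith only [hpiL_pos, hπ], hpiL_le⟩
  have hcs : c^2 + s^2 = 1 := by
    rw [hc_def, hs_def]; exact Real.cos_sq_add_sin_sq _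
  set r : ℝ := ‖v‖ with hr_def
  have hr : 0 < r := by rw [hr_def]; exact norm_pos_iff.mpr hv
  set ψ : ℝ := 2 * Real.pi * (m:ℝ) / (L:ℝ) with hψ_def
  set u : ℂ := Complex.exp (Complex.I * ((ψ:ℝ):ℂ)) with hu_def
  set φ : ℝ := θ - ψ with hφ_def
  clear_value c s r ψ u φ
  -- angle bounds
  have hT : (0:ℝ) < 2*Real.pi/L := by positivity
  have hφ_lb : -(Real.pi/L) ≤ φ := by
    have h1 : (m:ℝ) ≤ (θ + Real.pi/L)/(2*Real.pi/L) := by rw [hm]; exact Int.floor_le _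
    rw [le_div_iff₀ hT] at h1
    have e : (m:ℝ)*(2*Real.pi/L) = ψ := by rw [hψ_def]; ring
    rw [hφ_def, hψ_def]; rw [e, hψ_def] at h1; linarith only [h1]
  have hφ_ub : φ < Real.pi/L := by
    have h2 : (θ + Real.pi/L)/(2*Real.pi/L) < m + 1 := by rw [hm]; exact Int.lt_floor_add_one _
    rw [div_lt_iff₀ hT] at h2
    have e : ((m:ℝ)+1)*(2*Real.pi/L) = ψ + 2*Real.pi/L := by rw [hψ_def]; ring
    rw [e] at h2
    have e2 : 2*Real.pi/(L:ℝ) = 2*(Real.pi/L) := by ring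
    rw [hφ_def]; rw [e2] at h2; linarith only [h2]
  have habsφ : |φ| ≤ Real.pi / L := _root_.abs_le.2 ⟨hφ_lb, hφ_ub.le⟩
  -- vt in polar form
  have hv_eq : v = u * vt := by
    rw [hvt, hu_def, mul_comm (Complex.exp _) (v * _), mul_assoc, ← Complex.exp_add]
    simp
  have hvt2 : vt = (r:ℂ) * Complex.exp ((φ:ℝ) * Complex.I) := by
    rw [hvt, hθ, mul_assoc, ← Complex.exp_add]
    congr 1
    rw [hφ_def, hψ_def]; push_cast; ring
  have hre : vt.re = r * Real.cos φ := by
    rw [hvt2]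
    simp [Complex.mul_re, Complex.exp_ofReal_mul_I_re, Complex.exp_ofReal_mul_I_im]
  have him : vt.im = r * Real.sin φ := by
    rw [hvt2]
    simp [Complex.mul_im, Complex.exp_ofReal_mul_I_re, Complex.exp_ofReal_mul_I_im]
  -- sin/cos facts about φ
  have hsinabs : |Real.sin φ| = Real.sin |φ| := by
    rcases le_or_gt 0 φ with h | h
    · rw [_root_.abs_of_nonneg h,
        _root_.abs_of_nonneg (Real.sin_nonneg_of_nonneg_of_le_pi h (by linarith only [hφ_ub, hpiL_le, hπ]))]
    · rw [_root_.abs_of_neg h, Real.sin_neg]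
      have hsφ : Real.sin φ ≤ 0 := by
        have : Real.sin (-φ) ≥ 0 :=
          Real.sin_nonneg_of_nonneg_of_le_pi (by linarith only [h])
            (by linarith only [hφ_lb, hpiL_le, hπ])
        rw [Real.sin_neg] at this; linarith only [this]
      rw [_root_.abs_of_nonpos hsφ]
  have hkey1 : c * |Real.sin φ| ≤ s * Real.cos φ := by
    have h1 : 0 ≤ Real.sin (Real.pi/L - |φ|) :=
      Real.sin_nonneg_of_nonneg_of_le_pi (by linarith only [habsφ])
        (by linarith only [abs_nonneg φ, hpiL_le, hπ])
    rw [Real.sin_sub] at h1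
    rw [← hc_def, ← hs_def] at h1
    rw [hsinabs, ← Real.cos_abs φ, ← hc_def] at *
    linarith only [h1]
  have hcosφ0 : 0 ≤ Real.cos φ := by
    rw [← Real.cos_abs]
    apply Real.cos_nonneg_of_mem_Icc
    constructor
    · linarith only [abs_nonneg φ, hπ]
    · linarith only [habsφ, hpiL_le]
  have hvtre0 : 0 ≤ vt.re := by rw [hre]; exact mul_nonneg hr.le hcosφ0
  have hsvt : c * |vt.im| ≤ s * vt.re := by
    rw [hre, him, _root_.abs_mul, _root_.abs_of_nonneg hr.le]
    linarith only [mul_le_mul_of_nonneg_left hkey1 hr.le]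
  -- x and y
  set x : ℝ := min c (max vt.re 0) with hx_def
  set y : ℝ := min s (max vt.im (-s)) with hy_def
  clear_value x y
  have hx2 : x = min c vt.re := by rw [hx_def, max_eq_left hvtre0]
  have hx0 : 0 ≤ x := le_min hc_nonneg hvtre0 |>.trans_eq hx2.symm |>.trans_eq rfl
  have hxc : x ≤ c := hx2 ▸ min_le_left c vt.re
  have hxle : x ≤ vt.re := hx2 ▸ min_le_right c vt.re
  have ha : 0 ≤ vt.re - x := by linarith only [hxle]
  have hax : (vt.re - x) * x = (vt.re - x) * c := by
    rcases le_or_gt vt.re c with h | h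
    · rw [hx2, min_eq_right h]; ring
    · rw [hx2, min_eq_left h.le]
  -- y region analysis
  have hy_cases : (vt.im ≤ -s ∧ y = -s) ∨ (-s ≤ vt.im ∧ vt.im ≤ s ∧ y = vt.im) ∨
      (s ≤ vt.im ∧ y = s) := by
    rcases le_or_gt vt.im (-s) with h | h
    · exact Or.inl ⟨h, by rw [hy_def, max_eq_right h, min_eq_right (by linarith)]⟩
    · rcases le_or_gt s vt.im with h2 | h2
      · exact Or.inr (Or.inr ⟨h2, by
          rw [hy_def, max_eq_left (by linarith only [h2, hs_pos]), min_eq_left h2]⟩)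
      · exact Or.inr (Or.inl ⟨h.le, h2.le, by
          rw [hy_def, max_eq_left (by linarith only [h]), min_eq_right h2.le]⟩)
  have hy_ub : y ≤ s := hy_def ▸ min_le_left _ _
  have hy_lb : -s ≤ y := by
    rw [hy_def]; exact le_min (by linarith only [hs_pos]) (le_max_right _ _)
  have hsx : s * x ≤ s * c := mul_le_mul_of_nonneg_left hxc hs_pos.le
  have hF1 : (vt.im - y) * y = |vt.im - y| * s := by
    rcases hy_cases with ⟨h, hy2⟩ | ⟨h1, h2, hy2⟩ | ⟨h, hy2⟩
    · rw [hy2, _root_.abs_of_nonpos (by linarith only [h])]; ring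
    · rw [hy2]; simp
    · rw [hy2, _root_.abs_of_nonneg (by linarith only [h])]
  have hF2 : c * |vt.im - y| ≤ s * (vt.re - x) := by
    rcases hy_cases with ⟨h, hy2⟩ | ⟨h1, h2, hy2⟩ | ⟨h, hy2⟩
    · rw [hy2, _root_.abs_of_nonpos (by linarith only [h])]
      have habsim : |vt.im| = -vt.im := _root_.abs_of_nonpos (by linarith only [h, hs_pos])
      rw [habsim] at hsvt
      linarith only [hsvt, hsx]
    · rw [hy2]; simp only [sub_self, abs_zero, mul_zero]; exact mul_nonneg hs_pos.le ha
    · rw [hy2, _root_.abs_of_nonneg (by linarith only [h])]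
      have habsim : |vt.im| = vt.im := _root_.abs_of_nonneg (by linarith only [h, hs_pos])
      rw [habsim] at hsvt
      linarith only [hsvt, hsx]
  have hy_absle : |y| ≤ |vt.im| := by
    rcases hy_cases with ⟨h', hy2⟩ | ⟨h1, h2, hy2⟩ | ⟨h', hy2⟩
    · rw [hy2, _root_.abs_neg, _root_.abs_of_nonneg hs_pos.le,
        _root_.abs_of_nonpos (by linarith only [h', hs_pos])]
      linarith only [h']
    · rw [hy2]
    · rw [hy2, _root_.abs_of_nonneg hs_pos.le,
        _root_.abs_of_nonneg (by linarith only [h', hs_pos])]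
      linarith only [h']
  have hF3 : c * |y| ≤ s * x := by
    rcases le_or_gt vt.re c with h | h
    · have hxv : x = vt.re := by rw [hx2, min_eq_right h]
      rw [hxv]
      calc c * |y| ≤ c * |vt.im| := mul_le_mul_of_nonneg_left hy_absle hc_nonneg
        _ ≤ s * vt.re := hsvt
    · have hxv : x = c := by rw [hx2, min_eq_left h.le]
      rw [hxv]
      have habsy : |y| ≤ s := _root_.abs_le.2 ⟨hy_lb, hy_ub⟩
      linarith only [mul_le_mul_of_nonneg_left habsy hc_nonneg]
  -- rotation is inner-product preserving
  have hu1 : u.re^2 + u.im^2 = 1 := by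
    have h' : u = Complex.exp (((ψ:ℝ):ℂ) * Complex.I) := by rw [hu_def, mul_comm]
    rw [h', Complex.exp_ofReal_mul_I_re, Complex.exp_ofReal_mul_I_im]
    exact Real.cos_sq_add_sin_sq ψ
  -- variational inequality on the hull
  have hhalf : convexHull ℝ E ⊆ {q : ℂ |
      (v - Pv).re * q.re + (v - Pv).im * q.im ≤
        (v - Pv).re * Pv.re + (v - Pv).im * Pv.im} := by
    apply convexHull_min
    · rw [hE]
      rintro z ⟨k, hk, rfl⟩
      simp only [Set.mem_setOf_eq]
      have hz : Complex.exp (Complex.I * ((2 * Real.pi * (k:ℕ) / L + Real.pi / L : ℝ) : ℂ))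
          = u * Complex.exp ((((2*((((k:ℤ) - m : ℤ)):ℝ)+1) * Real.pi / (L:ℝ) : ℝ) : ℂ) * Complex.I) := by
        rw [hu_def, ← Complex.exp_add]
        congr 1
        rw [hψ_def]
        push_cast
        ring
      rw [hz, hPv, hv_eq, ← mul_sub,
        auxRot u _ _ hu1, auxRot u _ _ hu1]
      have hw're : (Complex.exp ((((2*((((k:ℤ) - m : ℤ)):ℝ)+1) * Real.pi / (L:ℝ) : ℝ) : ℂ) * Complex.I)).re
          = Real.cos ((2*((((k:ℤ) - m : ℤ)):ℝ)+1) * Real.pi / (L:ℝ)) :=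
        Complex.exp_ofReal_mul_I_re _
      have hw'im : (Complex.exp ((((2*((((k:ℤ) - m : ℤ)):ℝ)+1) * Real.pi / (L:ℝ) : ℝ) : ℂ) * Complex.I)).im
          = Real.sin ((2*((((k:ℤ) - m : ℤ)):ℝ)+1) * Real.pi / (L:ℝ)) :=
        Complex.exp_ofReal_mul_I_im _
      set α : ℝ := (2*((((k:ℤ) - m : ℤ)):ℝ)+1) * Real.pi / (L:ℝ) with hα_def
      clear_value α
      have hpt_re : (((x:ℝ):ℂ) + Complex.I*((y:ℝ):ℂ)).re = x := by simp
      have hpt_im : (((x:ℝ):ℂ) + Complex.I*((y:ℝ):ℂ)).im = y := by simp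
      rw [Complex.sub_re, Complex.sub_im, hw're, hw'im, hpt_re, hpt_im]
      -- goal : (vt.re - x) * cos α + (vt.im - y) * sin α ≤ (vt.re - x) * x + (vt.im - y) * y
      have hV1 := auxV1 L hL ((k:ℤ) - m)
      rw [← hc_def, ← hα_def] at hV1
      have hV2 := auxV2 c s (Real.cos α) (|Real.sin α|) hcs
        (by rw [_root_.sq_abs]; linarith only [Real.sin_sq_add_cos_sq α])
      have hcore := auxCore c s (vt.re - x) (|vt.im - y|) (Real.cos α) (|Real.sin α|)
        hc_nonneg hs_pos hcs ha (abs_nonneg _) hF2 hV1 (abs_nonneg _) hV2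
      have hsin : (vt.im - y) * Real.sin α ≤ |vt.im - y| * |Real.sin α| := by
        calc (vt.im - y) * Real.sin α ≤ |(vt.im - y) * Real.sin α| := _root_.le_abs_self _
          _ = |vt.im - y| * |Real.sin α| := _root_.abs_mul _ _
      linarith only [hax, hF1, hcore, hsin]
    · intro p hp q hq t1 t2 ht1 ht2 hsum12
      simp only [Set.mem_setOf_eq] at hp hq ⊢
      have e1 : (t1 • p + t2 • q).re = t1 * p.re + t2 * q.re := by
        simp [Complex.add_re, Complex.smul_re, smul_eq_mul]
      have e2 : (t1 • p + t2 • q).im = t1 * p.im + t2 * q.im := by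
        simp [Complex.add_im, Complex.smul_im, smul_eq_mul]
      rw [e1, e2]
      have hC : t1*((v - Pv).re * Pv.re + (v - Pv).im * Pv.im)
          + t2*((v - Pv).re * Pv.re + (v - Pv).im * Pv.im)
          = (v - Pv).re * Pv.re + (v - Pv).im * Pv.im := by
        rw [← add_mul, hsum12, one_mul]
      linarith only [mul_le_mul_of_nonneg_left hp ht1, mul_le_mul_of_nonneg_left hq ht2, hC, hsum12]
  have hVI : ∀ q ∈ convexHull ℝ E,
      (v - Pv).re*(q.re - Pv.re) + (v - Pv).im*(q.im - Pv.im) ≤ 0 := by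
    intro q hq
    have h := hhalf hq
    simp only [Set.mem_setOf_eq] at h
    linarith only [h]
  -- membership of Pv
  have hzero := auxZero L hL E hE
  obtain ⟨m1, hm1, hw1⟩ := auxMem L hL m
  obtain ⟨m2, hm2, hw2⟩ := auxMem L hL (m - 1)
  have hp1E : u * ((c:ℂ) + Complex.I*((s:ℝ):ℂ)) ∈ E := by
    rw [hE]
    refine ⟨m1, hm1, ?_⟩
    rw [← hw1]
    have h1 : ((c:ℝ):ℂ) + Complex.I*((s:ℝ):ℂ)
        = Complex.exp (((Real.pi/(L:ℝ) : ℝ):ℂ) * Complex.I) := by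
      rw [Complex.exp_mul_I, ← Complex.ofReal_cos, ← Complex.ofReal_sin, ← hc_def, ← hs_def]
      ring
    rw [h1, hu_def, ← Complex.exp_add]
    congr 1
    rw [hψ_def]
    push_cast
    ring
  have hp2E : u * ((c:ℂ) + Complex.I*((-s:ℝ):ℂ)) ∈ E := by
    rw [hE]
    refine ⟨m2, hm2, ?_⟩
    rw [← hw2]
    have h1 : ((c:ℝ):ℂ) + Complex.I*(((-s):ℝ):ℂ)
        = Complex.exp ((((-(Real.pi/(L:ℝ))) : ℝ):ℂ) * Complex.I) := by
      rw [Complex.exp_mul_I, ← Complex.ofReal_cos, ← Complex.ofReal_sin,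
        Real.cos_neg, Real.sin_neg, ← hc_def, ← hs_def]
      push_cast
      ring
    rw [h1, hu_def, ← Complex.exp_add]
    congr 1
    rw [hψ_def]
    push_cast
    ring
  have hp1 : u * ((c:ℂ) + Complex.I*((s:ℝ):ℂ)) ∈ convexHull ℝ E :=
    subset_convexHull ℝ E hp1E
  have hp2 : u * ((c:ℂ) + Complex.I*((-s:ℝ):ℂ)) ∈ convexHull ℝ E :=
    subset_convexHull ℝ E hp2E
  have hmem : Pv ∈ convexHull ℝ E := by
    rcases hc_nonneg.lt_or_eq with hcpos | hczero
    · have ht1 : 0 ≤ (s*x + c*y)/(2*c*s) := by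
        apply div_nonneg ?_ (by positivity)
        linarith only [hF3, mul_le_mul_of_nonneg_left (_root_.neg_abs_le y) hc_nonneg]
      have ht2 : 0 ≤ (s*x - c*y)/(2*c*s) := by
        apply div_nonneg ?_ (by positivity)
        linarith only [hF3, mul_le_mul_of_nonneg_left (_root_.le_abs_self y) hc_nonneg]
      have ht3 : 0 ≤ 1 - x/c := by
        have := (div_le_one hcpos).2 hxc
        linarith only [this]
      have hsum3 : (s*x + c*y)/(2*c*s) + (s*x - c*y)/(2*c*s) + (1 - x/c) = 1 := by
        field_simp
        ring
      have hcmb := auxComb3 _ (convex_convexHull ℝ E) _ _ _ hp1 hp2 hzero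
        ((s*x + c*y)/(2*c*s)) ((s*x - c*y)/(2*c*s)) (1 - x/c) ht1 ht2 ht3 hsum3
      have hcomb : ((s*x + c*y)/(2*c*s)) • (u * ((c:ℂ) + Complex.I*((s:ℝ):ℂ)))
          + ((s*x - c*y)/(2*c*s)) • (u * ((c:ℂ) + Complex.I*((-s:ℝ):ℂ)))
          + (1 - x/c) • (0:ℂ) = Pv := by
        rw [hPv, smul_zero, add_zero, Complex.real_smul, Complex.real_smul]
        have hpt : ((x:ℝ):ℂ) + Complex.I*((y:ℝ):ℂ)
            = (((s*x + c*y)/(2*c*s) : ℝ):ℂ)*((c:ℂ) + Complex.I*((s:ℝ):ℂ))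
              + (((s*x - c*y)/(2*c*s):ℝ):ℂ)*((c:ℂ) + Complex.I*((-s:ℝ):ℂ)) := by
          apply Complex.ext
          · simp only [Complex.add_re, Complex.mul_re, Complex.I_re, Complex.I_im,
              Complex.ofReal_re, Complex.ofReal_im, Complex.mul_im, Complex.add_im]
            field_simp
            ring
          · simp only [Complex.add_re, Complex.mul_re, Complex.I_re, Complex.I_im,
              Complex.ofReal_re, Complex.ofReal_im, Complex.mul_im, Complex.add_im]
            field_simp
            ring
        rw [hpt]
        ring
      rw [← hcomb]
      exact hcmb
    · have hc0 : c = 0 := hczero.symm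
      have hx0' : x = 0 := by
        rw [hx_def, hc0, min_eq_left (le_max_right vt.re 0)]
      have ht1 : 0 ≤ (s + y)/(2*s) := by
        apply div_nonneg (by linarith only [hy_lb]) (by positivity)
      have ht2 : 0 ≤ (s - y)/(2*s) := by
        apply div_nonneg (by linarith only [hy_ub]) (by positivity)
      have hsum3 : (s + y)/(2*s) + (s - y)/(2*s) + 0 = 1 := by
        field_simp
        ring
      have hcmb := auxComb3 _ (convex_convexHull ℝ E) _ _ _ hp1 hp2 hzero
        ((s + y)/(2*s)) ((s - y)/(2*s)) 0 ht1 ht2 le_rfl hsum3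
      have hcomb : ((s + y)/(2*s)) • (u * ((c:ℂ) + Complex.I*((s:ℝ):ℂ)))
          + ((s - y)/(2*s)) • (u * ((c:ℂ) + Complex.I*((-s:ℝ):ℂ)))
          + (0:ℝ) • (0:ℂ) = Pv := by
        rw [hPv, smul_zero, add_zero, Complex.real_smul, Complex.real_smul]
        have hpt : ((x:ℝ):ℂ) + Complex.I*((y:ℝ):ℂ)
            = (((s + y)/(2*s) : ℝ):ℂ)*((c:ℂ) + Complex.I*((s:ℝ):ℂ))
              + (((s - y)/(2*s):ℝ):ℂ)*((c:ℂ) + Complex.I*((-s:ℝ):ℂ)) := by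
          apply Complex.ext
          · simp only [Complex.add_re, Complex.mul_re, Complex.I_re, Complex.I_im,
              Complex.ofReal_re, Complex.ofReal_im, Complex.mul_im, Complex.add_im]
            rw [hx0', hc0]
            field_simp
            ring
          · simp only [Complex.add_re, Complex.mul_re, Complex.I_re, Complex.I_im,
              Complex.ofReal_re, Complex.ofReal_im, Complex.mul_im, Complex.add_im]
            field_simp
            ring
        rw [hpt]
        ring
      rw [← hcomb]
      exact hcmb
  -- pythagoras-style estimate
  have hpyth : ∀ q : ℂ, (v - Pv).re*(q.re - Pv.re) + (v - Pv).im*(q.im - Pv.im) ≤ 0 →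
      dist v Pv ^2 + ((q.re - Pv.re)^2 + (q.im - Pv.im)^2) ≤ dist v q ^2 := by
    intro q h
    rw [Complex.dist_eq, Complex.dist_eq, Complex.sq_norm, Complex.sq_norm,
      Complex.normSq_apply, Complex.normSq_apply]
    simp only [Complex.sub_re, Complex.sub_im] at h ⊢
    nlinarith only [h]
  refine ⟨hmem, ?_, ?_⟩
  · intro q hq
    have h1 := hpyth q (hVI q hq)
    exact auxDist _ _ _ h1
      (by positivity) dist_nonneg dist_nonneg
  · intro q hq heq
    have h1 := hpyth q (hVI q hq)
    rw [heq] at h1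
    have e1 : (q.re - Pv.re)^2 = 0 :=
      le_antisymm (by linarith only [h1, sq_nonneg (q.im - Pv.im)]) (sq_nonneg _)
    have e2 : (q.im - Pv.im)^2 = 0 :=
      le_antisymm (by linarith only [h1, sq_nonneg (q.re - Pv.re)]) (sq_nonneg _)
    have e1' : q.re = Pv.re := by
      have := sq_eq_zero_iff.1 e1; linarith only [this]
    have e2' : q.im = Pv.im := by
      have := sq_eq_zero_iff.1 e2; linarith only [this]
    exact Complex.ext e1' e2'
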